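/- For x = (x₁,x₂) ∈ ℝ² and y = (y₁,y₂,y₃) ∈ ℝ³ define the half-flat incidence condition S(x,y): x₁y₂ + x₂(y₁−y₃) = 0. Then: (i) if y ≠ 0 and y is not a scalar multiple of (1,0,1), there exists a nonzero x ∈ ℝ² with S(x,y), and any two nonzero solutions x, x′ of S(·,y) are proportional (so the fibre over the projective point [y] is a single projective point); (ii) if y is a nonzero scalar multiple of (1,0,1), then S(x,y) holds for every x ∈ ℝ². Consequently, the projection of the incidence variety {([x],[y]) ∈ ℝP¹×ℝP² : S(x,y)} to ℝP² is a bijection over the complement of [1:0:1], and the fibre over [1:0:1] is all of ℝP¹. -/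

import Mathlib

noncomputable section

/-- The half-flat incidence condition `S(x,y) : x₁y₂ + x₂(y₁ − y₃) = 0`. -/
def Scond (x : Fin 2 → ℝ) (y : Fin 3 → ℝ) : Prop :=
  x 0 * y 1 + x 1 * (y 0 - y 2) = 0

theorem stmt12 :
    -- (i) over a `y` that is not a multiple of `(1,0,1)`, the fibre is a single projective point
    (∀ y : Fin 3 → ℝ, y ≠ 0 → (¬∃ μ : ℝ, y = μ • ![1, 0, 1]) →
      ((∃ x : Fin 2 → ℝ, x ≠ 0 ∧ Scond x y) ∧
        ∀ x x' : Fin 2 → ℝ, x ≠ 0 → x' ≠ 0 → Scond x y → Scond x' y →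
          ∃ t : ℝ, x' = t • x)) ∧
    -- (ii) over a nonzero multiple of `(1,0,1)` the condition holds for every `x`
    (∀ μ : ℝ, μ ≠ 0 → ∀ x : Fin 2 → ℝ, Scond x (μ • ![1, 0, 1])) := by
  constructor
  · intro y _hy hnm
    -- a = y 1, b = y 0 - y 2, not both zero
    set a := y 1 with ha
    set b := y 0 - y 2 with hb
    have hab : a ≠ 0 ∨ b ≠ 0 := by
      by_contra h
      push_neg at h
      obtain ⟨h1, h2⟩ := h
      rw [ha] at h1
      rw [hb] at h2
      apply hnm
      refine ⟨y 0, ?_⟩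
      funext i
      fin_cases i <;> simp [Matrix.smul_cons] <;> linarith
    constructor
    · refine ⟨![-b, a], ?_, ?_⟩
      · intro h
        rcases hab with h' | h'
        · exact h' (by have := congrFun h 1; simpa using this)
        · exact h' (neg_eq_zero.mp (by have := congrFun h 0; simpa using this))
      · show (![-b, a] : Fin 2 → ℝ) 0 * y 1 + (![-b, a] : Fin 2 → ℝ) 1 * (y 0 - y 2) = 0
        simp [← ha, ← hb]; ring
    · intro x x' hx hx' hs hs'
      have hs : x 0 * a + x 1 * b = 0 := hs
      have hs' : x' 0 * a + x' 1 * b = 0 := hs'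
      rcases hab with h' | h'
      · -- a ≠ 0 : x 1 ≠ 0
        have hx1 : x 1 ≠ 0 := by
          intro h1
          apply hx
          funext i
          fin_cases i
          · have : x 0 * a = 0 := by rw [h1] at hs; linarith
            simpa using (mul_eq_zero.mp this).resolve_right h'
          · simpa using h1
        refine ⟨x' 1 / x 1, ?_⟩
        funext i
        fin_cases i
        · show x' 0 = x' 1 / x 1 * x 0
          have e1 : x 0 = -(x 1 * b) / a := by field_simp; linarith
          have e2 : x' 0 = -(x' 1 * b) / a := by field_simp; linarith
          rw [e1, e2]; field_simp
        · show x' 1 = x' 1 / x 1 * x 1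
          field_simp
      · -- b ≠ 0
        have hx0 : x 0 ≠ 0 := by
          intro h1
          apply hx
          funext i
          fin_cases i
          · simpa using h1
          · have : x 1 * b = 0 := by rw [h1] at hs; linarith
            simpa using (mul_eq_zero.mp this).resolve_right h'
        refine ⟨x' 0 / x 0, ?_⟩
        funext i
        fin_cases i
        · show x' 0 = x' 0 / x 0 * x 0
          field_simp
        · show x' 1 = x' 0 / x 0 * x 1
          have e1 : x 1 = -(x 0 * a) / b := by field_simp; linarith
          have e2 : x' 1 = -(x' 0 * a) / b := by field_simp; linarith
          rw [e1, e2]; field_simp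
  · intro μ _ x
    show x 0 * (μ • ![1, 0, 1] : Fin 3 → ℝ) 1 +
        x 1 * ((μ • ![1, 0, 1] : Fin 3 → ℝ) 0 - (μ • ![1, 0, 1] : Fin 3 → ℝ) 2) = 0
    simp
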